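/- Let k ≥ 1 be an integer and let G be an edge-colored graph with |V(G)| ≥ 12k² + 4k and average color degree d̂(G) ≥ 2k. Then G contains a rainbow matching of size k. -/

import Mathlib

/-- The color degree of a vertex `v`: the number of distinct colors appearing
on edges of `G` incident to `v`. -/
noncomputable def colorDegree {V : Type*} (G : SimpleGraph V) (c : Sym2 V → ℕ) (v : V) : ℕ :=
  (c '' {e : Sym2 V | e ∈ G.edgeSet ∧ v ∈ e}).ncard

/-- `M` is a rainbow matching in the edge-colored graph `(G, c)`:
a set of edges of `G`, pairwise vertex-disjoint, with pairwise distinct colors. -/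
def IsRainbowMatching {V : Type*} (G : SimpleGraph V) (c : Sym2 V → ℕ)
    (M : Finset (Sym2 V)) : Prop :=
  ↑M ⊆ G.edgeSet ∧
  (∀ e ∈ M, ∀ f ∈ M, e ≠ f → ∀ v : V, v ∈ e → v ∉ f) ∧
  Set.InjOn c ↑M

set_option linter.unusedSectionVars false
section Aux

variable {V : Type*} [Fintype V] [DecidableEq V] (G : SimpleGraph V) [DecidableRel G.Adj]
  (c : Sym2 V → ℕ)

/-- colorDegree as a Finset card. -/
lemma colorDegree_eq (v : V) :
    colorDegree G c v = ((G.incidenceFinset v).image c).card := by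
  have h : {e : Sym2 V | e ∈ G.edgeSet ∧ v ∈ e} = ↑(G.incidenceFinset v) := by
    ext e
    simp [SimpleGraph.mem_incidenceFinset, SimpleGraph.incidenceSet]
  rw [colorDegree, h, ← Finset.coe_image, Set.ncard_coe_finset]

lemma colorDegree_lt_card (v : V) : colorDegree G c v < Fintype.card V := by
  calc colorDegree G c v = ((G.incidenceFinset v).image c).card := colorDegree_eq G c v
    _ ≤ (G.incidenceFinset v).card := Finset.card_image_le
    _ = G.degree v := G.card_incidenceFinset_eq_degree v
    _ < Fintype.card V := G.degree_lt_card_verts v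

variable {G c}

lemma irm_subset {M M' : Finset (Sym2 V)} (h : IsRainbowMatching G c M) (hsub : M' ⊆ M) :
    IsRainbowMatching G c M' := by
  obtain ⟨h1, h2, h3⟩ := h
  exact ⟨fun e he => h1 (hsub he), fun e he f hf => h2 e (hsub he) f (hsub hf),
    h3.mono (by exact_mod_cast hsub)⟩

/-- The vertex set of a matching, as a Finset. -/
noncomputable def mVerts (M : Finset (Sym2 V)) : Finset V :=
  Finset.univ.filter (fun v => ∃ e ∈ M, v ∈ e)

lemma mem_mVerts {M : Finset (Sym2 V)} {v : V} : v ∈ mVerts M ↔ ∃ e ∈ M, v ∈ e := by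
  simp [mVerts]

lemma mVerts_card_le {M : Finset (Sym2 V)} : (mVerts M).card ≤ 2 * M.card := by
  have hsub : mVerts M ⊆ M.biUnion (fun e => Finset.univ.filter (fun v => v ∈ e)) := by
    intro v hv
    rw [mem_mVerts] at hv
    obtain ⟨e, he, hve⟩ := hv
    exact Finset.mem_biUnion.2 ⟨e, he, by simp [hve]⟩
  refine (Finset.card_le_card hsub).trans ?_
  rw [mul_comm]
  refine Finset.card_biUnion_le.trans (Finset.sum_le_card_nsmul _ _ 2 ?_)
  intro e _
  induction e with
  | _ x y =>
    refine (Finset.card_le_card (t := {x, y}) ?_).trans ((Finset.card_insert_le x {y}).trans (by simp))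
    intro v hv
    simp only [Finset.mem_filter, Sym2.mem_iff] at hv
    rcases hv.2 with h | h <;> simp [h]

lemma irm_insert {M : Finset (Sym2 V)} (hM : IsRainbowMatching G c M) {e : Sym2 V}
    (he : e ∈ G.edgeSet) (hd : ∀ v : V, v ∈ e → v ∉ mVerts M)
    (hc : c e ∉ M.image c) :
    IsRainbowMatching G c (insert e M) ∧ (insert e M).card = M.card + 1 := by
  obtain ⟨h1, h2, h3⟩ := hM
  have heM : e ∉ M := by
    intro heM
    have hx : e.out.1 ∈ e := Sym2.out_fst_mem e
    exact hd e.out.1 hx (mem_mVerts.2 ⟨e, heM, hx⟩)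
  have hdisj : ∀ f ∈ M, ∀ v : V, v ∈ e → v ∉ f := by
    intro f hf v hv hvf
    exact hd v hv (mem_mVerts.2 ⟨f, hf, hvf⟩)
  refine ⟨⟨?_, ?_, ?_⟩, by rw [Finset.card_insert_of_notMem heM]⟩
  · intro f hf
    rw [Finset.coe_insert, Set.mem_insert_iff] at hf
    rcases hf with rfl | hf
    · exact he
    · exact h1 hf
  · intro a ha b hb hab v hva hvb
    rw [Finset.mem_insert] at ha hb
    rcases ha with rfl | ha
    · rcases hb with rfl | hb
      · exact hab rfl
      · exact hdisj b hb v hva hvb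
    · rcases hb with rfl | hb
      · exact hdisj a ha v hvb hva
      · exact h2 a ha b hb hab v hva hvb
  · intro a ha b hb hab
    rw [Finset.coe_insert, Set.mem_insert_iff] at ha hb
    rcases ha with rfl | ha
    · rcases hb with rfl | hb
      · rfl
      · exact absurd (hab ▸ Finset.mem_image_of_mem c hb) hc
    · rcases hb with rfl | hb
      · exact absurd (hab ▸ Finset.mem_image_of_mem c ha) hc
      · exact h3 ha hb hab

lemma incidence_image (v : V) :
    (G.incidenceFinset v).image c = (G.neighborFinset v).image (fun z => c s(v, z)) := by
  apply Finset.ext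
  intro γ
  simp only [Finset.mem_image]
  constructor
  · rintro ⟨ε, hε, rfl⟩
    rw [SimpleGraph.mem_incidenceFinset] at hε
    obtain ⟨hεE, hvε⟩ := hε
    obtain ⟨z, rfl⟩ := Sym2.mem_iff_exists.1 hvε
    refine ⟨z, ?_, rfl⟩
    rw [SimpleGraph.mem_neighborFinset]
    exact (SimpleGraph.mem_edgeSet G).1 hεE
  · rintro ⟨z, hz, rfl⟩
    rw [SimpleGraph.mem_neighborFinset] at hz
    refine ⟨s(v, z), ?_, rfl⟩
    rw [SimpleGraph.mem_incidenceFinset]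
    exact ⟨(SimpleGraph.mem_edgeSet G).2 hz, Sym2.mem_mk_left v z⟩

lemma mVerts_mono {M M' : Finset (Sym2 V)} (h : M' ⊆ M) : mVerts M' ⊆ mVerts M := by
  intro v hv
  rw [mem_mVerts] at hv ⊢
  obtain ⟨e, he, hve⟩ := hv
  exact ⟨e, h he, hve⟩

lemma sym2_exists_rep (e : Sym2 V) : ∃ x y : V, e = s(x, y) := by
  induction e with
  | _ x y => exact ⟨x, y, rfl⟩

/-- Core lemma: many vertices of color degree at least 2k give a rainbow k-matching. -/
lemma core (k : ℕ) (hk : 1 ≤ k)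
    (hhigh : 4 * k ≤ (Finset.univ.filter (fun v => 2 * k ≤ colorDegree G c v)).card) :
    ∃ M : Finset (Sym2 V), IsRainbowMatching G c M ∧ M.card = k := by
  obtain ⟨M, hM, hmax⟩ := Set.Finite.exists_maximalFor Finset.card
      {M : Finset (Sym2 V) | IsRainbowMatching G c M} (Set.toFinite _)
      ⟨∅, by refine ⟨by simp, by simp, by simp⟩⟩
  simp only [Set.mem_setOf_eq] at hM hmax
  by_cases hcard : k ≤ M.card
  · obtain ⟨T, hTsub, hT⟩ := Finset.exists_subset_card_eq hcard
    exact ⟨T, irm_subset hM hTsub, hT⟩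
  push_neg at hcard
  exfalso
  have hnomax : ∀ M' : Finset (Sym2 V), IsRainbowMatching G c M' → M'.card ≤ M.card := by
    intro M' hM'
    by_contra hlt
    push_neg at hlt
    have := hmax hM' hlt.le
    omega
  set m := M.card with hm
  set CM := M.image c with hCM
  have hCMcard : CM.card ≤ m := Finset.card_image_le
  set VM := mVerts M with hVMdef
  have hVMcard : VM.card ≤ 2 * m := mVerts_card_le
  set RH := (Finset.univ.filter (fun v => 2 * k ≤ colorDegree G c v)) \ VM with hRH
  have hRHcard : 2 * m + 1 ≤ RH.card := by
    have h1 : (Finset.univ.filter (fun v => 2 * k ≤ colorDegree G c v)).card - VM.card ≤ RH.card :=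
      Finset.le_card_sdiff _ _
    omega
  -- every high vertex outside VM has a "pair" on some matching edge
  have hpair : ∀ v ∈ RH, ∃ e ∈ M, ∃ x y : V, e = s(x, y) ∧
      s(v, x) ∈ G.edgeSet ∧ s(v, y) ∈ G.edgeSet ∧
      c s(v, x) ∉ CM ∧ c s(v, y) ∉ CM ∧ c s(v, x) ≠ c s(v, y) := by
    intro v hv
    have hvVM : v ∉ VM := (Finset.mem_sdiff.1 hv).2
    have hvdeg : 2 * k ≤ colorDegree G c v := by
      have := (Finset.mem_sdiff.1 hv).1
      rw [Finset.mem_filter] at this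
      exact this.2
    set N := G.neighborFinset v with hN
    set g : V → ℕ := fun z => c s(v, z) with hg
    have himg : (G.incidenceFinset v).image c = N.image g := by
      apply Finset.ext
      intro γ
      simp only [Finset.mem_image]
      constructor
      · rintro ⟨ε, hε, rfl⟩
        rw [SimpleGraph.mem_incidenceFinset] at hε
        obtain ⟨hεE, hvε⟩ := hε
        obtain ⟨z, rfl⟩ := Sym2.mem_iff_exists.1 hvε
        refine ⟨z, ?_, rfl⟩
        rw [hN, SimpleGraph.mem_neighborFinset]
        exact (SimpleGraph.mem_edgeSet G).1 hεE
      · rintro ⟨z, hz, rfl⟩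
        rw [hN, SimpleGraph.mem_neighborFinset] at hz
        refine ⟨s(v, z), ?_, rfl⟩
        rw [SimpleGraph.mem_incidenceFinset]
        exact ⟨(SimpleGraph.mem_edgeSet G).2 hz, Sym2.mem_mk_left v z⟩
    have hold : ∀ z ∈ N, z ∉ VM → g z ∈ CM := by
      intro z hz hzVM
      by_contra hnew
      have hadj : G.Adj v z := by rwa [hN, SimpleGraph.mem_neighborFinset] at hz
      have hd : ∀ w : V, w ∈ s(v, z) → w ∉ mVerts M := by
        intro w hw
        rw [Sym2.mem_iff] at hw
        rcases hw with rfl | rfl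
        · exact hvVM
        · exact hzVM
      obtain ⟨hins, hcard1⟩ := irm_insert hM ((SimpleGraph.mem_edgeSet G).2 hadj) hd hnew
      have := hnomax _ hins
      omega
    have h1 : (N.image g) \ CM ⊆ ((N ∩ VM).image g) \ CM := by
      intro γ hγ
      rw [Finset.mem_sdiff] at hγ ⊢
      refine ⟨?_, hγ.2⟩
      obtain ⟨z, hz, rfl⟩ := Finset.mem_image.1 hγ.1
      have hzVM : z ∈ VM := by
        by_contra h
        exact hγ.2 (hold z hz h)
      exact Finset.mem_image_of_mem g (Finset.mem_inter.2 ⟨hz, hzVM⟩)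
    have hdeg' : colorDegree G c v = (N.image g).card := by
      rw [colorDegree_eq, himg]
    have hbig : m + 1 ≤ (((N ∩ VM).image g) \ CM).card := by
      have h2 : (N.image g).card - CM.card ≤ ((N.image g) \ CM).card :=
        Finset.le_card_sdiff _ _
      have h3 := Finset.card_le_card h1
      omega
    by_contra hno
    push_neg at hno
    have hcover : ((N ∩ VM).image g) \ CM ⊆
        M.biUnion (fun e => ((N.filter (· ∈ e)).image g) \ CM) := by
      intro γ hγ
      rw [Finset.mem_sdiff] at hγ
      obtain ⟨z, hz, rfl⟩ := Finset.mem_image.1 hγ.1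
      rw [Finset.mem_inter] at hz
      obtain ⟨f, hf, hzf⟩ := mem_mVerts.1 (hVMdef ▸ hz.2)
      refine Finset.mem_biUnion.2 ⟨f, hf, ?_⟩
      rw [Finset.mem_sdiff]
      exact ⟨Finset.mem_image_of_mem g (Finset.mem_filter.2 ⟨hz.1, hzf⟩), hγ.2⟩
    have hsmall : ∀ e ∈ M, (((N.filter (· ∈ e)).image g) \ CM).card ≤ 1 := by
      intro e he
      by_contra h2le
      push_neg at h2le
      obtain ⟨γ1, hγ1, γ2, hγ2, hγne⟩ := Finset.one_lt_card.1 h2le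
      rw [Finset.mem_sdiff] at hγ1 hγ2
      obtain ⟨z1, hz1, hz1e⟩ := Finset.mem_image.1 hγ1.1
      obtain ⟨z2, hz2, hz2e⟩ := Finset.mem_image.1 hγ2.1
      rw [Finset.mem_filter] at hz1 hz2
      have hz12 : z1 ≠ z2 := by
        intro h
        rw [h, hz2e] at hz1e
        exact hγne hz1e.symm
      obtain ⟨x, y, rfl⟩ := sym2_exists_rep e
      have hadj1 : G.Adj v z1 := by
        have := hz1.1
        rwa [hN, SimpleGraph.mem_neighborFinset] at this
      have hadj2 : G.Adj v z2 := by
        have := hz2.1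
        rwa [hN, SimpleGraph.mem_neighborFinset] at this
      have hE1 : s(v, z1) ∈ G.edgeSet := (SimpleGraph.mem_edgeSet G).2 hadj1
      have hE2 : s(v, z2) ∈ G.edgeSet := (SimpleGraph.mem_edgeSet G).2 hadj2
      have hc1 : c s(v, z1) ∉ CM := by
        have h := hγ1.2
        rw [← hz1e] at h
        exact h
      have hc2 : c s(v, z2) ∉ CM := by
        have h := hγ2.2
        rw [← hz2e] at h
        exact h
      have hcne : c s(v, z1) ≠ c s(v, z2) := by
        intro h
        apply hγne
        rw [← hz1e, ← hz2e]
        exact h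
      have hm1 : z1 = x ∨ z1 = y := Sym2.mem_iff.1 hz1.2
      have hm2 : z2 = x ∨ z2 = y := Sym2.mem_iff.1 hz2.2
      rcases hm1 with rfl | rfl
      · rcases hm2 with rfl | rfl
        · exact hz12 rfl
        · exact hcne (hno s(z1, z2) he z1 z2 rfl hE1 hE2 hc1 hc2)
      · rcases hm2 with rfl | rfl
        · exact hcne.symm (hno s(z2, z1) he z2 z1 rfl hE2 hE1 hc2 hc1)
        · exact hz12 rfl
    have hfin := (Finset.card_le_card hcover).trans
      (Finset.card_biUnion_le.trans (Finset.sum_le_card_nsmul _ _ 1 hsmall))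
    simp only [smul_eq_mul, mul_one] at hfin
    omega
  -- choose the matching edge for each high vertex
  set F : V → Sym2 V := fun v => if h : v ∈ RH then (hpair v h).choose else s(v, v) with hF
  have hFspec : ∀ v (h : v ∈ RH), F v ∈ M ∧ ∃ x y : V, F v = s(x, y) ∧
      s(v, x) ∈ G.edgeSet ∧ s(v, y) ∈ G.edgeSet ∧
      c s(v, x) ∉ CM ∧ c s(v, y) ∉ CM ∧ c s(v, x) ≠ c s(v, y) := by
    intro v h
    rw [hF]
    simp only [dif_pos h]
    obtain ⟨he, hrest⟩ := (hpair v h).choose_spec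
    exact ⟨he, hrest⟩
  -- pigeonhole: three high vertices share a matching edge
  obtain ⟨e, heM, hfib⟩ : ∃ e ∈ M, 2 < (RH.filter (fun v => F v = e)).card := by
    apply Finset.exists_lt_card_fiber_of_mul_lt_card_of_maps_to
    · intro v hv; exact (hFspec v hv).1
    · omega
  obtain ⟨v1, hv1⟩ := Finset.card_pos.1 (by omega : 0 < (RH.filter (fun v => F v = e)).card)
  have h2 : 1 < ((RH.filter (fun v => F v = e)).erase v1).card := by
    have := Finset.card_erase_of_mem hv1
    omega
  obtain ⟨v2, hv2, v3, hv3, hv23⟩ := Finset.one_lt_card.1 h2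
  -- fix a representation e = s(x,y) and show each vᵢ has edges to x and y with new colors
  obtain ⟨x, y, hexy⟩ := sym2_exists_rep e
  have hQ : ∀ v ∈ (RH.filter (fun v => F v = e)),
      s(v, x) ∈ G.edgeSet ∧ s(v, y) ∈ G.edgeSet ∧
      c s(v, x) ∉ CM ∧ c s(v, y) ∉ CM ∧ c s(v, x) ≠ c s(v, y) := by
    intro v hv
    rw [Finset.mem_filter] at hv
    obtain ⟨_, x', y', hxy', e1, e2, c1, c2, cne⟩ := hFspec v hv.1
    rw [hv.2, hexy] at hxy'
    rcases Sym2.eq_iff.1 hxy' with ⟨rfl, rfl⟩ | ⟨rfl, rfl⟩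
    · exact ⟨e1, e2, c1, c2, cne⟩
    · exact ⟨e2, e1, c2, c1, cne.symm⟩
  have hv2m := Finset.mem_of_mem_erase hv2
  have hv3m := Finset.mem_of_mem_erase hv3
  have hv12 : v1 ≠ v2 := (Finset.ne_of_mem_erase hv2).symm
  have hv13 : v1 ≠ v3 := (Finset.ne_of_mem_erase hv3).symm
  obtain ⟨E1x, E1y, C1x, C1y, N1⟩ := hQ v1 hv1
  obtain ⟨E2x, E2y, C2x, C2y, N2⟩ := hQ v2 hv2m
  obtain ⟨E3x, E3y, C3x, C3y, N3⟩ := hQ v3 hv3m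
  have notVM : ∀ v ∈ (RH.filter (fun v => F v = e)), v ∉ VM := by
    intro v hv
    exact (Finset.mem_sdiff.1 (Finset.mem_filter.1 hv).1).2
  have key : ∃ u w : V, u ≠ w ∧ u ∉ VM ∧ w ∉ VM ∧ s(u, x) ∈ G.edgeSet ∧
      s(w, y) ∈ G.edgeSet ∧ c s(u, x) ∉ CM ∧ c s(w, y) ∉ CM ∧ c s(u, x) ≠ c s(w, y) := by
    by_contra hblock
    push_neg at hblock
    have e13 := hblock v1 v3 hv13 (notVM _ hv1) (notVM _ hv3m) E1x E3y C1x C3y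
    have e23 := hblock v2 v3 hv23 (notVM _ hv2m) (notVM _ hv3m) E2x E3y C2x C3y
    have e21 := hblock v2 v1 hv12.symm (notVM _ hv2m) (notVM _ hv1) E2x E1y C2x C1y
    exact N1 (by omega)
  obtain ⟨u, w, huw, huVM, hwVM, hux, hwy, hcux, hcwy, hcuw⟩ := key
  have hxe : x ∈ e := by rw [hexy]; exact Sym2.mem_mk_left x y
  have hye : y ∈ e := by rw [hexy]; exact Sym2.mem_mk_right x y
  have hxy : x ≠ y := by
    intro h
    exact G.not_isDiag_of_mem_edgeSet (hM.1 (Finset.mem_coe.2 heM))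
      (by rw [hexy]; exact Sym2.mk_isDiag_iff.2 h)
  have hxVM : x ∈ VM := mem_mVerts.2 ⟨e, heM, hxe⟩
  have hyVM : y ∈ VM := mem_mVerts.2 ⟨e, heM, hye⟩
  set M1 := M.erase e with hM1
  have hM1sub : M1 ⊆ M := Finset.erase_subset e M
  have hM1rm : IsRainbowMatching G c M1 := irm_subset hM hM1sub
  have hM1img : M1.image c ⊆ CM := Finset.image_subset_image hM1sub
  have hM1V : mVerts M1 ⊆ VM := mVerts_mono hM1sub
  have hyM1 : y ∉ mVerts M1 := by
    intro hy
    obtain ⟨f, hf, hyf⟩ := mem_mVerts.1 hy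
    rw [hM1, Finset.mem_erase] at hf
    exact hM.2.1 e heM f hf.2 (fun hh => hf.1 hh.symm) y hye hyf
  have hxM1 : x ∉ mVerts M1 := by
    intro hx
    obtain ⟨f, hf, hxf⟩ := mem_mVerts.1 hx
    rw [hM1, Finset.mem_erase] at hf
    exact hM.2.1 e heM f hf.2 (fun hh => hf.1 hh.symm) x hxe hxf
  obtain ⟨hins1, hcard1⟩ := irm_insert hM1rm hwy
    (by
      intro t ht
      rw [Sym2.mem_iff] at ht
      rcases ht with rfl | rfl
      · exact fun h => hwVM (hM1V h)
      · exact hyM1)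
    (fun h => hcwy (hM1img h))
  obtain ⟨hins2, hcard2⟩ := irm_insert hins1 hux
    (by
      intro t ht
      rw [Sym2.mem_iff] at ht
      rcases ht with rfl | rfl
      · intro h
        obtain ⟨f, hf, htf⟩ := mem_mVerts.1 h
        rw [Finset.mem_insert] at hf
        rcases hf with rfl | hf
        · rw [Sym2.mem_iff] at htf
          rcases htf with rfl | rfl
          · exact huw rfl
          · exact huVM hyVM
        · exact huVM (hM1V (mem_mVerts.2 ⟨f, hf, htf⟩))
      · intro h
        obtain ⟨f, hf, htf⟩ := mem_mVerts.1 h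
        rw [Finset.mem_insert] at hf
        rcases hf with rfl | hf
        · rw [Sym2.mem_iff] at htf
          rcases htf with rfl | rfl
          · exact hwVM hxVM
          · exact hxy rfl
        · exact hxM1 (mem_mVerts.2 ⟨f, hf, htf⟩))
    (by
      intro h
      rw [Finset.image_insert, Finset.mem_insert] at h
      rcases h with h | h
      · exact hcuw h
      · exact hcux (hM1img h))
  have hle := hnomax _ hins2
  have hM1card : M1.card = m - 1 := Finset.card_erase_of_mem heM
  have hm1 : 1 ≤ m := Finset.card_pos.2 ⟨e, heM⟩
  omega

end Aux

/-- Main lemma, by induction on k. -/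
lemma main_lemma : ∀ (k : ℕ) {V : Type*} [Fintype V] [DecidableEq V]
    (G : SimpleGraph V) [DecidableRel G.Adj] (c : Sym2 V → ℕ),
    12 * k ^ 2 + 4 * k ≤ Fintype.card V →
    2 * k * Fintype.card V ≤ ∑ v, colorDegree G c v →
    ∃ M : Finset (Sym2 V), IsRainbowMatching G c M ∧ M.card = k := by
  intro k
  induction k with
  | zero =>
    intro V _ _ G _ c hn hS
    exact ⟨∅, ⟨by simp, by simp, by simp⟩, Finset.card_empty⟩
  | succ k ih =>
    intro V _ _ G _ c hn hS
    have hmono : 12 * k ^ 2 + 4 * k + (24 * k + 16) ≤ Fintype.card V := by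
      calc 12 * k ^ 2 + 4 * k + (24 * k + 16) = 12 * (k+1) ^ 2 + 4 * (k+1) := by ring
        _ ≤ _ := hn
    have hn16 : 16 ≤ Fintype.card V :=
      le_trans (Nat.le_add_left _ _) hmono
    by_cases hA : ∃ x : V, 3 * (k + 1) ≤ colorDegree G c x
    · obtain ⟨x, hx⟩ := hA
      set V' := {w : V // w ≠ x} with hV'
      set G' : SimpleGraph V' := SimpleGraph.comap Subtype.val G with hG'
      haveI : DecidableRel G'.Adj := Classical.decRel _
      set c' : Sym2 V' → ℕ := fun e => c (Sym2.map Subtype.val e) with hc'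
      have hcardV' : Fintype.card V' + 1 = Fintype.card V := by
        have h1 : Fintype.card V' = Fintype.card V - Fintype.card {w : V // w = x} :=
          Fintype.card_subtype_compl _
        have h2 : Fintype.card {w : V // w = x} = 1 := Fintype.card_subtype_eq x
        rw [h1, h2]
        omega
      -- color degree decreases by at most one
      have hdel : ∀ w : V', colorDegree G c w.val ≤ colorDegree G' c' w + 1 := by
        intro w
        rw [colorDegree_eq, colorDegree_eq]
        have hsub : (G.incidenceFinset w.val).image c ⊆
            insert (c s(w.val, x)) ((G'.incidenceFinset w).image c') := by
          intro γ hγ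
          obtain ⟨ε, hε, rfl⟩ := Finset.mem_image.1 hγ
          rw [SimpleGraph.mem_incidenceFinset] at hε
          obtain ⟨hεE, hwε⟩ := hε
          obtain ⟨z, rfl⟩ := Sym2.mem_iff_exists.1 hwε
          by_cases hzx : z = x
          · subst hzx
            exact Finset.mem_insert_self _ _
          · refine Finset.mem_insert_of_mem ?_
            refine Finset.mem_image.2 ⟨s(w, ⟨z, hzx⟩), ?_, ?_⟩
            · rw [SimpleGraph.mem_incidenceFinset]
              refine ⟨?_, Sym2.mem_mk_left _ _⟩
              exact (SimpleGraph.mem_edgeSet G').2 ((SimpleGraph.mem_edgeSet G).1 hεE)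
            · show c (Sym2.map Subtype.val s(w, ⟨z, hzx⟩)) = c s(w.val, z)
              rw [Sym2.map_pair_eq]
        calc ((G.incidenceFinset w.val).image c).card
            ≤ (insert (c s(w.val, x)) ((G'.incidenceFinset w).image c')).card :=
              Finset.card_le_card hsub
          _ ≤ ((G'.incidenceFinset w).image c').card + 1 := Finset.card_insert_le _ _
      -- the sum hypothesis transfers
      have hErase : ∑ w : V', colorDegree G c w.val =
          ∑ v ∈ Finset.univ.erase x, colorDegree G c v := by
        rw [Finset.sum_subtype (p := fun w => w ≠ x) (Finset.univ.erase x)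
          (fun v => by simp [Finset.mem_erase]) (colorDegree G c)]
      have hSplit : colorDegree G c x + ∑ v ∈ Finset.univ.erase x, colorDegree G c v =
          ∑ v, colorDegree G c v := Finset.add_sum_erase _ _ (Finset.mem_univ x)
      have hPt : ∑ w : V', colorDegree G c w.val ≤
          (∑ w : V', colorDegree G' c' w) + Fintype.card V' := by
        calc ∑ w : V', colorDegree G c w.val ≤ ∑ w : V', (colorDegree G' c' w + 1) :=
              Finset.sum_le_sum (fun w _ => hdel w)
          _ = (∑ w : V', colorDegree G' c' w) + Fintype.card V' := by
              rw [Finset.sum_add_distrib, Finset.sum_const, Finset.card_univ, smul_eq_mul,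
                mul_one]
      have hdx : colorDegree G c x < Fintype.card V := colorDegree_lt_card G c x
      have hsum' : 2 * k * Fintype.card V' ≤ ∑ w : V', colorDegree G' c' w := by
        set n' := Fintype.card V' with hn'
        have h1 : 2 * k * n' + 2 * n' + (2 * k + 2) ≤ ∑ v, colorDegree G c v := by
          calc 2 * k * n' + 2 * n' + (2 * k + 2) = 2 * (k + 1) * (n' + 1) := by ring
            _ = 2 * (k + 1) * Fintype.card V := by rw [hcardV']
            _ ≤ _ := hS
        have h3 : ∑ v, colorDegree G c v ≤ (∑ w : V', colorDegree G' c' w) + 2 * n' := by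
          omega
        have h4 : 2 * k * n' + 2 * n' ≤ (∑ w : V', colorDegree G' c' w) + 2 * n' :=
          le_trans (le_trans (Nat.le_add_right _ _) h1) h3
        omega
      have hncard' : 12 * k ^ 2 + 4 * k ≤ Fintype.card V' := by
        have : 12 * k ^ 2 + 4 * k + (24 * k + 16) ≤ Fintype.card V' + 1 := by
          rw [hcardV']; exact hmono
        omega
      obtain ⟨M', hM', hMcard'⟩ := ih G' c' hncard' hsum'
      -- push the matching back to V
      have hinj : Function.Injective (Sym2.map (Subtype.val : V' → V)) :=
        Sym2.map.injective Subtype.val_injective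
      set M : Finset (Sym2 V) := M'.image (Sym2.map Subtype.val) with hMdef
      have hMcard : M.card = k := by
        rw [hMdef, Finset.card_image_of_injective _ hinj, hMcard']
      have hMrm : IsRainbowMatching G c M := by
        obtain ⟨m1, m2, m3⟩ := hM'
        refine ⟨?_, ?_, ?_⟩
        · intro e he
          rw [Finset.mem_coe, hMdef, Finset.mem_image] at he
          obtain ⟨ε, hε, rfl⟩ := he
          obtain ⟨a, b, rfl⟩ := sym2_exists_rep ε
          rw [Sym2.map_pair_eq, SimpleGraph.mem_edgeSet]
          exact m1 (Finset.mem_coe.2 hε)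
        · intro e he f hf hef v hve hvf
          rw [hMdef, Finset.mem_image] at he hf
          obtain ⟨ε, hε, rfl⟩ := he
          obtain ⟨φ, hφ, rfl⟩ := hf
          obtain ⟨t, htε, htv⟩ := Sym2.mem_map.1 hve
          obtain ⟨t', ht'φ, ht'v⟩ := Sym2.mem_map.1 hvf
          have htt' : t' = t := Subtype.val_injective (by rw [htv, ht'v])
          exact m2 ε hε φ hφ (fun h => hef (by rw [h])) t htε (htt' ▸ ht'φ)
        · intro e he f hf hvc
          rw [Finset.mem_coe, hMdef, Finset.mem_image] at he hf
          obtain ⟨ε, hε, rfl⟩ := he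
          obtain ⟨φ, hφ, rfl⟩ := hf
          have : ε = φ := m3 (Finset.mem_coe.2 hε) (Finset.mem_coe.2 hφ) hvc
          rw [this]
      have hxM : x ∉ mVerts M := by
        intro hx'
        obtain ⟨e, he, hxe⟩ := mem_mVerts.1 hx'
        rw [hMdef, Finset.mem_image] at he
        obtain ⟨ε, hε, rfl⟩ := he
        obtain ⟨t, htε, htv⟩ := Sym2.mem_map.1 hxe
        exact t.2 htv
      -- extend through x
      have hVMcard : (mVerts M).card ≤ 2 * k := by
        have := mVerts_card_le (M := M)
        omega
      have hCMcard : (M.image c).card ≤ k := le_trans Finset.card_image_le hMcard.le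
      set N := G.neighborFinset x with hN
      set g : V → ℕ := fun z => c s(x, z) with hg
      have hgood : ∃ z ∈ N, z ∉ mVerts M ∧ g z ∉ M.image c := by
        by_contra hbad
        push_neg at hbad
        have hsub : N.image g ⊆ ((N ∩ mVerts M).image g) ∪ M.image c := by
          intro γ hγ
          obtain ⟨z, hz, rfl⟩ := Finset.mem_image.1 hγ
          by_cases hzVM : z ∈ mVerts M
          · exact Finset.mem_union_left _
              (Finset.mem_image_of_mem g (Finset.mem_inter.2 ⟨hz, hzVM⟩))
          · exact Finset.mem_union_right _ (hbad z hz hzVM)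
        have hcard1 : (N.image g).card ≤ 3 * k := by
          calc (N.image g).card ≤ ((N ∩ mVerts M).image g).card + (M.image c).card :=
                le_trans (Finset.card_le_card hsub) (Finset.card_union_le _ _)
            _ ≤ (N ∩ mVerts M).card + (M.image c).card :=
                Nat.add_le_add_right Finset.card_image_le _
            _ ≤ (mVerts M).card + (M.image c).card :=
                Nat.add_le_add_right (Finset.card_le_card Finset.inter_subset_right) _
            _ ≤ 3 * k := by omega
        have hdeg : colorDegree G c x = (N.image g).card := by
          rw [colorDegree_eq, incidence_image]
        omega
      obtain ⟨z, hzN, hzVM, hznew⟩ := hgood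
      have hadj : G.Adj x z := by rwa [hN, SimpleGraph.mem_neighborFinset] at hzN
      obtain ⟨hins, hcardins⟩ := irm_insert hMrm ((SimpleGraph.mem_edgeSet G).2 hadj)
        (by
          intro t ht
          rw [Sym2.mem_iff] at ht
          rcases ht with rfl | rfl
          · exact hxM
          · exact hzVM)
        hznew
      exact ⟨insert s(x, z) M, hins, by omega⟩
    · push_neg at hA
      apply core (k + 1) (by omega)
      by_contra hlt
      push_neg at hlt
      set High := Finset.univ.filter (fun v => 2 * (k + 1) ≤ colorDegree G c v) with hH
      have h1 : ∑ v ∈ High, colorDegree G c v ≤ High.card * (3 * k + 2) :=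
        Finset.sum_le_card_nsmul _ _ _ (fun v _ => by have := hA v; omega)
      have h2 : ∑ v ∈ Finset.univ \ High, colorDegree G c v ≤
          (Finset.univ \ High).card * (2 * k + 1) := by
        refine Finset.sum_le_card_nsmul _ _ _ (fun v hv => ?_)
        rw [Finset.mem_sdiff, hH, Finset.mem_filter] at hv
        have : ¬ (2 * (k + 1) ≤ colorDegree G c v) := fun h => hv.2 ⟨Finset.mem_univ v, h⟩
        omega
      have h3 : ∑ v ∈ Finset.univ \ High, colorDegree G c v + ∑ v ∈ High, colorDegree G c v
          = ∑ v, colorDegree G c v := Finset.sum_sdiff (Finset.subset_univ High)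
      have h4 : (Finset.univ \ High).card + High.card = Fintype.card V := by
        rw [Finset.card_sdiff_add_card_eq_card (Finset.subset_univ High), Finset.card_univ]
      -- contradiction by counting
      set h := High.card
      set h' := (Finset.univ \ High).card
      have hub : 2 * (k + 1) * (h' + h) ≤ h * (3 * k + 2) + h' * (2 * k + 1) := by
        calc 2 * (k + 1) * (h' + h) = 2 * (k + 1) * Fintype.card V := by rw [h4]
          _ ≤ ∑ v, colorDegree G c v := hS
          _ = _ := h3.symm
          _ ≤ h * (3 * k + 2) + h' * (2 * k + 1) := by omega
      have hub2 : h' ≤ k * h := by nlinarith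
      have hfin : Fintype.card V ≤ (4 * k + 3) * (k + 1) := by
        calc Fintype.card V = h' + h := h4.symm
          _ ≤ k * h + h := by omega
          _ = h * (k + 1) := by ring
          _ ≤ (4 * k + 3) * (k + 1) := Nat.mul_le_mul_right _ (by omega)
      nlinarith [hn, hfin]

/-- Kritschgau: every edge-colored graph on at least `12k² + 4k` vertices with average
color degree at least `2k` contains a rainbow matching of size `k`. -/
theorem rainbow_matching_many_vertices_avg_color_degree
    {V : Type*} [Fintype V] (k : ℕ) (hk : 1 ≤ k)
    (G : SimpleGraph V) (c : Sym2 V → ℕ)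
    (hn : 12 * k ^ 2 + 4 * k ≤ Fintype.card V)
    (havg : (2 * (k : ℚ)) ≤ (∑ v, (colorDegree G c v : ℚ)) / (Fintype.card V : ℚ)) :
    ∃ M : Finset (Sym2 V), IsRainbowMatching G c M ∧ M.card = k := by
  classical
  have hn0 : 0 < Fintype.card V := by
    have : 1 ≤ 12 * k ^ 2 + 4 * k := by nlinarith
    omega
  have hq : (0:ℚ) < (Fintype.card V : ℚ) := by exact_mod_cast hn0
  rw [le_div_iff₀ hq] at havg
  have hsum : 2 * k * Fintype.card V ≤ ∑ v, colorDegree G c v := by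
    have : ((2 * k * Fintype.card V : ℕ) : ℚ) ≤ ((∑ v, colorDegree G c v : ℕ) : ℚ) := by
      push_cast
      calc (2 * (k:ℚ) * (Fintype.card V : ℚ)) ≤ (∑ v, (colorDegree G c v : ℚ)) := havg
        _ = _ := by norm_num
    exact_mod_cast this
  exact main_lemma k G c hn hsum
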